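/- Let π be a permutation of size n, written as π = μ₁A₁μ₂A₂⋯μₖAₖ where μ₁,…,μₖ are all the left-to-right maxima of π (and the Aᵢ are possibly empty blocks of remaining entries). Then applying one pass of bubblesort to π yields B(π) = A₁μ₁A₂μ₂⋯Aₖμₖ. -/

import Mathlib

/-- One pass of bubblesort on a list of naturals. -/
def bpass : List ℕ → List ℕ
  | [] => []
  | [a] => [a]
  | a :: b :: l => if b < a then b :: bpass (a :: l) else a :: bpass (b :: l)

/-- The identity permutation 1 2 ... n as a list. -/
def idList (n : ℕ) : List ℕ := List.map (· + 1) (List.range n)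

/-- `l` is (the word of) a permutation of size `n`, i.e. a rearrangement of 1,...,n. -/
def IsPermList (n : ℕ) (l : List ℕ) : Prop := l.Perm (idList n)

/-- position `j` of `l` holds a left-to-right maximum. -/
def IsLTRMax (l : List ℕ) (j : ℕ) : Prop :=
  j < l.length ∧ ∀ i < j, l.getD i 0 < l.getD j 0

instance (l : List ℕ) (j : ℕ) : Decidable (IsLTRMax l j) := by
  unfold IsLTRMax; infer_instance

/-- the number of left-to-right maxima of `l`. -/
def ltrCount (l : List ℕ) : ℕ :=
  ((List.range l.length).filter fun j => decide (IsLTRMax l j)).length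

/-- the length of the longest suffix of `l` consisting of left-to-right maxima. -/
def suffLen (l : List ℕ) : ℕ :=
  ((List.range l.length).takeWhile fun j => decide (IsLTRMax l (l.length - 1 - j))).length

/-- `σ` is a node of the tree `T(π)` of iterated bubblesort preimages. -/
def IsNode (n : ℕ) (π σ : List ℕ) : Prop :=
  IsPermList n σ ∧ ∃ j, bpass^[j] σ = π

/-- `σ` is a node of `T(π)` at height `j` (j passes needed to reach π, and no fewer). -/
def IsNodeAt (n : ℕ) (π σ : List ℕ) (j : ℕ) : Prop :=
  IsPermList n σ ∧ bpass^[j] σ = π ∧ ∀ i < j, bpass^[i] σ ≠ π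

/-- `τ` is a leaf: it has no child, i.e. no bubblesort preimage other than itself. -/
def IsLeafNode (n : ℕ) (τ : List ℕ) : Prop :=
  ¬ ∃ ρ, IsPermList n ρ ∧ ρ ≠ τ ∧ bpass ρ = τ

/-- `T(π)` and `T(τ)` are isomorphic as rooted trees: there is a bijection between
their node sets sending root to root and commuting with the parent map `bpass`. -/
def TreeIso (n : ℕ) (π τ : List ℕ) : Prop :=
  ∃ φ : List ℕ → List ℕ,
    (∀ σ, IsNode n π σ → IsNode n τ (φ σ)) ∧
    (∀ σ σ', IsNode n π σ → IsNode n π σ' → φ σ = φ σ' → σ = σ') ∧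
    (∀ ρ, IsNode n τ ρ → ∃ σ, IsNode n π σ ∧ φ σ = ρ) ∧
    φ π = τ ∧
    (∀ σ, IsNode n π σ → σ ≠ π → φ (bpass σ) = bpass (φ σ))

/-- If `π = μ₁A₁μ₂A₂⋯μₖAₖ` where the `μᵢ` are all the left-to-right maxima of `π`
(each `μᵢ` exceeds all previous entries and every entry of `Aᵢ` is smaller than `μᵢ`),
then `bpass π = A₁μ₁A₂μ₂⋯Aₖμₖ`. -/

lemma bpass_small (A : List ℕ) (m : ℕ) (rest : List ℕ) (h : ∀ x ∈ A, x < m) :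
    bpass (m :: (A ++ rest)) = A ++ bpass (m :: rest) := by
  induction A with
  | nil => rfl
  | cons a A ih =>
      have ha : a < m := h a (by simp)
      simp only [List.cons_append, bpass, if_pos ha]
      rw [ih (fun x hx => h x (by simp [hx]))]

lemma bpass_blocks (l : List (ℕ × List ℕ))
    (hc : (l.map Prod.fst).Chain' (· < ·))
    (hA : ∀ p ∈ l, ∀ x ∈ p.2, x < p.1) :
    bpass (l.flatMap fun p => p.1 :: p.2) = l.flatMap fun p => p.2 ++ [p.1] := by
  induction l with
  | nil => simp [bpass]
  | cons p rest ih =>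
      obtain ⟨m, A⟩ := p
      have hAm : ∀ x ∈ A, x < m := hA (m, A) (by simp)
      simp only [List.flatMap_cons, List.cons_append]
      rw [bpass_small A m _ hAm, List.append_assoc]
      congr 1
      cases rest with
      | nil => simp [bpass]
      | cons q rest' =>
          obtain ⟨m', A'⟩ := q
          have hmm' : m < m' := by
            simpa using (List.isChain_cons_cons.mp hc).1
          have hrest : bpass (((m', A') :: rest').flatMap fun p => p.1 :: p.2)
              = ((m', A') :: rest').flatMap fun p => p.2 ++ [p.1] := by
            apply ih
            · exact (List.isChain_cons_cons.mp hc).2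
            · exact fun q hq => hA q (by simp [hq])
          simp only [List.flatMap_cons, List.cons_append] at hrest ⊢
          rw [show bpass (m :: m' :: (A' ++ rest'.flatMap fun p => p.1 :: p.2))
              = m :: bpass (m' :: (A' ++ rest'.flatMap fun p => p.1 :: p.2)) from by
            simp [bpass, Nat.not_lt.mpr (le_of_lt hmm')], hrest]
          simp

theorem stmt_0 (n k : ℕ) (π : List ℕ) (hπ : IsPermList n π)
    (ms : List ℕ) (As : List (List ℕ))
    (hms : ms.length = k) (hAs : As.length = k)
    (hchain : ms.Chain' (· < ·))
    (hA : ∀ i < k, ∀ x ∈ As.getD i [], x < ms.getD i 0)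
    (hdec : π = (ms.zip As).flatMap fun p => p.1 :: p.2) :
    bpass π = (ms.zip As).flatMap fun p => p.2 ++ [p.1] := by
  subst hdec
  apply bpass_blocks
  · rw [List.map_fst_zip (show ms.length ≤ As.length by omega)]; exact hchain
  · intro p hp x hx
    obtain ⟨i, hi, hget⟩ := List.mem_iff_getElem.mp hp
    have hil : i < ms.length := by simp at hi; omega
    have hiA : i < As.length := by simp at hi; omega
    have : p = (ms[i], As[i]) := by rw [← hget]; simp
    subst this
    have := hA i (by omega) x (by rwa [List.getD_eq_getElem As [] hiA])
    rwa [List.getD_eq_getElem ms 0 hil] at this
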